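/- Sum formula consequence at level 2 in depth 2: for every integer m ≥ 1, ∑_{a=0}^{m} (a+1) ζ^{oe}(m−a+1, a+2) + ζ^{oe}(2, m+1) + (m+1) ζ^{oe}(1, m+2) = ζ^o(2) ζ^o(m+1), where ζ^o(s) = ∑_{n≥0} (2n+1)^{−s} = (1−2^{−s})ζ(s) and ζ^{oe}(k,s) = ∑_{m≥0}∑_{n≥1} (2m+1)^{−k}(2m+2n)^{−s}. -/

import Mathlib

open Real Finset

lemma summable_oddpow (k : ℕ) (hk : 2 ≤ k) :
    Summable (fun n : ℕ => 1 / (2 * (n : ℝ) + 1) ^ k) := by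
  have hbase : Summable (fun n : ℕ => 1 / ((n : ℝ) + 1) ^ 2) := by
    have h := (summable_nat_add_iff (f := fun n : ℕ => 1 / (n : ℝ) ^ 2) 1).mpr
      (Real.summable_one_div_nat_pow.mpr one_lt_two)
    simpa using h
  refine Summable.of_nonneg_of_le (fun n => by positivity) (fun n => ?_) hbase
  have hn : (0:ℝ) ≤ (n:ℝ) := Nat.cast_nonneg n
  have h1 : ((n : ℝ) + 1) ^ 2 ≤ (2 * (n : ℝ) + 1) ^ 2 := by
    apply pow_le_pow_left₀ (by positivity); linarith
  have h2 : (2 * (n : ℝ) + 1) ^ 2 ≤ (2 * (n : ℝ) + 1) ^ k :=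
    pow_le_pow_right₀ (by linarith) hk
  exact one_div_le_one_div_of_le (by positivity) (by linarith)

lemma summable_G (m k s : ℕ) (hm : 1 ≤ m) (hks : k + s = m + 3) (hs : 2 ≤ s) :
    Summable (fun p : ℕ × ℕ =>
      1 / ((2 * (p.1 : ℝ) + 1) ^ k * (2 * (p.1 : ℝ) + 2 * ((p.2 : ℝ) + 1)) ^ s)) := by
  have h1 := summable_oddpow (m + 1) (by omega : 2 ≤ m + 1)
  have h2 := summable_oddpow 2 le_rfl
  have hbound := h1.mul_of_nonneg h2 (fun n => by positivity) (fun n => by positivity)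
  refine Summable.of_nonneg_of_le (fun p => by positivity) (fun p => ?_) hbound
  obtain ⟨i, j⟩ := p
  have hi : (0:ℝ) ≤ (i:ℝ) := Nat.cast_nonneg i
  have hj : (0:ℝ) ≤ (j:ℝ) := Nat.cast_nonneg j
  rw [div_mul_div_comm, one_mul]
  apply one_div_le_one_div_of_le (by positivity)
  have hkm : k + (s - 2) = m + 1 := by omega
  have hZ : (2 * (i : ℝ) + 2 * ((j : ℝ) + 1)) ^ s
      = (2 * (i : ℝ) + 2 * ((j : ℝ) + 1)) ^ (s - 2) * (2 * (i : ℝ) + 2 * ((j : ℝ) + 1)) ^ 2 := by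
    rw [← pow_add]; congr 1; omega
  have hX : (2 * (i : ℝ) + 1) ^ (m + 1) = (2 * (i : ℝ) + 1) ^ k * (2 * (i : ℝ) + 1) ^ (s - 2) := by
    rw [← pow_add, hkm]
  rw [hZ, hX, mul_assoc]
  refine mul_le_mul_of_nonneg_left ?_ (by positivity)
  refine mul_le_mul ?_ ?_ (by positivity) (by positivity)
  · exact pow_le_pow_left₀ (by positivity) (by linarith) _
  · exact pow_le_pow_left₀ (by positivity) (by linarith) _

lemma pf (m : ℕ) (x y : ℝ) (hx : 0 < x) (hy : 0 < y) :
    1 / (x ^ 2 * y ^ (m + 1)) =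
      (∑ a ∈ Finset.range (m + 1), ((a : ℝ) + 1) / (y ^ (m - a + 1) * (x + y) ^ (a + 2)))
        + 1 / (x ^ 2 * (x + y) ^ (m + 1)) + ((m : ℝ) + 1) / (x * (x + y) ^ (m + 2)) := by
  have hx' : x ≠ 0 := hx.ne'
  have hy' : y ≠ 0 := hy.ne'
  have hs : x + y ≠ 0 := by positivity
  induction m with
  | zero =>
    simp only [Finset.sum_range_one, Nat.cast_zero, Nat.zero_sub, Nat.sub_self]
    norm_num
    field_simp
    ring
  | succ n ih =>
    have hS : ∑ a ∈ Finset.range (n + 1 + 1), ((a : ℝ) + 1) / (y ^ (n + 1 - a + 1) * (x + y) ^ (a + 2))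
        = (1 / y) * (∑ a ∈ Finset.range (n + 1), ((a : ℝ) + 1) / (y ^ (n - a + 1) * (x + y) ^ (a + 2)))
          + ((n : ℝ) + 1 + 1) / (y * (x + y) ^ (n + 1 + 2)) := by
      rw [Finset.sum_range_succ, Finset.mul_sum]
      congr 1
      · refine Finset.sum_congr rfl fun a ha => ?_
        have ha' : a ≤ n := by simpa [Nat.lt_succ_iff] using Finset.mem_range.mp ha
        have he : n + 1 - a + 1 = (n - a + 1) + 1 := by omega
        rw [he, pow_succ, div_mul_div_comm, one_mul]
        congr 1
        ring
      · have h1 : n + 1 - (n + 1) + 1 = 1 := by omega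
        rw [h1, pow_one]
        push_cast
        ring
    rw [hS]
    have hSval : (∑ a ∈ Finset.range (n + 1), ((a : ℝ) + 1) / (y ^ (n - a + 1) * (x + y) ^ (a + 2)))
        = 1 / (x ^ 2 * y ^ (n + 1)) - 1 / (x ^ 2 * (x + y) ^ (n + 1))
          - ((n : ℝ) + 1) / (x * (x + y) ^ (n + 2)) := by
      rw [ih]; ring
    rw [hSval]
    field_simp
    push_cast
    ring

/-- The odd zeta function `ζ^o(s) = ∑_{n ≥ 0} 1/(2n+1)^s`. -/
noncomputable def zetaO (s : ℕ) : ℝ := ∑' n : ℕ, 1 / (2 * (n : ℝ) + 1) ^ s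

/-- The odd–even double zeta value
`ζ^{oe}(k,s) = ∑_{m ≥ 0} ∑_{n ≥ 1} 1/((2m+1)^k (2m+2n)^s)`. -/
noncomputable def zetaOE (k s : ℕ) : ℝ :=
  ∑' p : ℕ × ℕ,
    1 / ((2 * (p.1 : ℝ) + 1) ^ k * (2 * (p.1 : ℝ) + 2 * ((p.2 : ℝ) + 1)) ^ s)

theorem stmt19 (m : ℕ) (hm : 1 ≤ m) :
    (∑ a ∈ Finset.range (m + 1), ((a : ℝ) + 1) * zetaOE (m - a + 1) (a + 2)) +
        zetaOE 2 (m + 1) + ((m : ℝ) + 1) * zetaOE 1 (m + 2) =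
      zetaO 2 * zetaO (m + 1) := by
  have h2 := summable_oddpow 2 le_rfl
  have hm1 := summable_oddpow (m + 1) (by omega : 2 ≤ m + 1)
  have hf := h2.mul_of_nonneg hm1 (fun n => by positivity) (fun n => by positivity)
  have hA : ∀ a ∈ Finset.range (m + 1), Summable (fun p : ℕ × ℕ =>
      ((a : ℝ) + 1) * (1 / ((2 * (p.2 : ℝ) + 1) ^ (m - a + 1)
        * (2 * (p.2 : ℝ) + 2 * ((p.1 : ℝ) + 1)) ^ (a + 2)))) := by
    intro a ha
    have ha' : a ≤ m := by have := Finset.mem_range.mp ha; omega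
    have h := ((summable_G m (m - a + 1) (a + 2) hm (by omega) (by omega)).prod_symm).mul_left
      ((a : ℝ) + 1)
    simpa using h
  have hB := summable_G m 2 (m + 1) hm (by omega) (by omega)
  have hC := (summable_G m 1 (m + 2) hm (by omega) (by omega)).mul_left ((m : ℝ) + 1)
  have hAsum : Summable (fun p : ℕ × ℕ => ∑ a ∈ Finset.range (m + 1),
      ((a : ℝ) + 1) * (1 / ((2 * (p.2 : ℝ) + 1) ^ (m - a + 1)
        * (2 * (p.2 : ℝ) + 2 * ((p.1 : ℝ) + 1)) ^ (a + 2)))) :=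
    summable_sum hA
  have hdec : ∀ p : ℕ × ℕ,
      (1 / (2 * (p.1 : ℝ) + 1) ^ 2) * (1 / (2 * (p.2 : ℝ) + 1) ^ (m + 1)) =
      (∑ a ∈ Finset.range (m + 1), ((a : ℝ) + 1) * (1 / ((2 * (p.2 : ℝ) + 1) ^ (m - a + 1)
        * (2 * (p.2 : ℝ) + 2 * ((p.1 : ℝ) + 1)) ^ (a + 2))))
      + 1 / ((2 * (p.1 : ℝ) + 1) ^ 2 * (2 * (p.1 : ℝ) + 2 * ((p.2 : ℝ) + 1)) ^ (m + 1))
      + ((m : ℝ) + 1) * (1 / ((2 * (p.1 : ℝ) + 1) ^ 1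
        * (2 * (p.1 : ℝ) + 2 * ((p.2 : ℝ) + 1)) ^ (m + 2))) := by
    intro p
    have hp := pf m (2 * (p.1 : ℝ) + 1) (2 * (p.2 : ℝ) + 1) (by positivity) (by positivity)
    rw [div_mul_div_comm, one_mul, hp]
    congr 1
    · congr 1
      · refine Finset.sum_congr rfl fun a _ => ?_
        rw [mul_one_div]
        congr 1
        ring
      · congr 1
        ring
    · rw [mul_one_div, pow_one]
      congr 1
      ring
  have hprod : zetaO 2 * zetaO (m + 1)
      = ∑' p : ℕ × ℕ, (1 / (2 * (p.1 : ℝ) + 1) ^ 2) * (1 / (2 * (p.2 : ℝ) + 1) ^ (m + 1)) := by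
    rw [zetaO, zetaO, Summable.tsum_prod' hf hf.prod_factor]
    dsimp only
    simp_rw [tsum_mul_left]
    rw [tsum_mul_right]
  have e1 : (∑ a ∈ Finset.range (m + 1), ∑' p : ℕ × ℕ, ((a : ℝ) + 1) *
        (1 / ((2 * (p.2 : ℝ) + 1) ^ (m - a + 1) * (2 * (p.2 : ℝ) + 2 * ((p.1 : ℝ) + 1)) ^ (a + 2))))
      = ∑ a ∈ Finset.range (m + 1), ((a : ℝ) + 1) * zetaOE (m - a + 1) (a + 2) := by
    refine Finset.sum_congr rfl fun a ha => ?_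
    rw [tsum_mul_left]
    congr 1
    rw [zetaOE, ← Equiv.tsum_eq (Equiv.prodComm ℕ ℕ)]
    rfl
  have e3 : (∑' p : ℕ × ℕ, ((m : ℝ) + 1) *
        (1 / ((2 * (p.1 : ℝ) + 1) ^ 1 * (2 * (p.1 : ℝ) + 2 * ((p.2 : ℝ) + 1)) ^ (m + 2))))
      = ((m : ℝ) + 1) * zetaOE 1 (m + 2) := by
    rw [tsum_mul_left]
    rfl
  rw [hprod, tsum_congr hdec, Summable.tsum_add (hAsum.add hB) hC, Summable.tsum_add hAsum hB, Summable.tsum_finsetSum hA,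
    e1, e3]
  rfl
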